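/- Let α be a permutation of a finite set X and let z_a, z_b be cycles of α of lengths a and b on disjoint supports (or on equal supports when considering one cycle against itself). Consider the induced action of α on X × X acting componentwise. If z_a and z_b are disjoint cycles, then the set of pairs with first component in the support of z_a and second component in the support of z_b (a set of size ab) splits into exactly gcd(a,b) orbits, each of length lcm(a,b). -/

import Mathlib

open Equiv Equiv.Perm

lemma aux_pc_pow {X : Type*} (α : Equiv.Perm X) (n : ℕ) :
    (Equiv.prodCongr α α) ^ n = Equiv.prodCongr (α ^ n) (α ^ n) := by
  induction n with
  | zero => ext p <;> simp
  | succ n ih =>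
      rw [pow_succ, pow_succ, ih]
      ext p <;> simp [Equiv.Perm.mul_apply]

lemma aux_pc_zpow {X : Type*} (α : Equiv.Perm X) (k : ℤ) :
    (Equiv.prodCongr α α) ^ k = Equiv.prodCongr (α ^ k) (α ^ k) := by
  cases k with
  | ofNat n => simpa using aux_pc_pow α n
  | negSucc n =>
      rw [zpow_negSucc, zpow_negSucc, aux_pc_pow]
      ext p <;> simp [Equiv.Perm.inv_def, Equiv.prodCongr_symm]

lemma aux_isCycleOn {X : Type*} (α : Equiv.Perm X) (x : X) :
    α.IsCycleOn {y | α.SameCycle x y} := by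
  refine ⟨⟨fun y hy => ?_, α.injective.injOn, fun y hy => ?_⟩,
    fun y hy z hz => hy.symm.trans hz⟩
  · exact Equiv.Perm.sameCycle_apply_right.mpr hy
  · exact ⟨α⁻¹ y, hy.trans ⟨-1, by rw [zpow_neg_one]⟩, α.apply_symm_apply y⟩

lemma aux_period {X : Type*} [Fintype X] (α : Equiv.Perm X) {x y : X}
    (hy : α.SameCycle x y) (k : ℤ) :
    (α ^ k) y = y ↔ (({z | α.SameCycle x z}.ncard : ℤ)) ∣ k := by
  have hfin : {z | α.SameCycle x z}.Finite := Set.toFinite _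
  have h1 : α.IsCycleOn (hfin.toFinset : Set X) := by
    rw [Set.Finite.coe_toFinset]; exact aux_isCycleOn α x
  have h2 := Equiv.Perm.IsCycleOn.zpow_apply_eq h1 (a := y)
    (hfin.mem_toFinset.mpr hy) (n := k)
  rwa [Set.ncard_eq_toFinset_card _ hfin]

lemma aux_key {X : Type*} [Fintype X] (α : Equiv.Perm X) {x y : X}
    (hy : α.SameCycle x y) (i j : ℤ) :
    (α ^ i) y = (α ^ j) y ↔ (({z | α.SameCycle x z}.ncard : ℤ)) ∣ i - j := by
  constructor
  · intro h
    apply (aux_period α hy (i - j)).mp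
    apply (α ^ j).injective
    calc (α ^ j) ((α ^ (i - j)) y) = (α ^ i) y := by
          rw [← Equiv.Perm.mul_apply, ← zpow_add]; congr 1; ring
      _ = (α ^ j) y := h
  · intro h
    calc (α ^ i) y = (α ^ j) ((α ^ (i - j)) y) := by
          rw [← Equiv.Perm.mul_apply, ← zpow_add]; congr 1; ring
      _ = (α ^ j) y := by rw [(aux_period α hy (i - j)).mpr h]

theorem stmt9 {X : Type*} [Fintype X] (α : Equiv.Perm X) (a b : ℕ)
    (ha : 1 ≤ a) (hb : 1 ≤ b) (xa xb : X) (Sa Sb : Set X)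
    (hSa : Sa = {y | α.SameCycle xa y}) (hSb : Sb = {y | α.SameCycle xb y})
    (hca : Sa.ncard = a) (hcb : Sb.ncard = b) (hdisj : Disjoint Sa Sb) :
    (∀ p ∈ Sa ×ˢ Sb,
        Set.ncard {q | Equiv.Perm.SameCycle (Equiv.prodCongr α α) p q} = Nat.lcm a b) ∧
    Set.ncard {O : Set (X × X) | ∃ p ∈ Sa ×ˢ Sb,
        O = {q | Equiv.Perm.SameCycle (Equiv.prodCongr α α) p q}} = Nat.gcd a b := by
  classical
  set n := Nat.lcm a b with hn
  have hnpos : 0 < n := Nat.lcm_pos ha hb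
  have hadvd : (a : ℤ) ∣ (n : ℤ) := Int.natCast_dvd_natCast.mpr (Nat.dvd_lcm_left a b)
  have hbdvd : (b : ℤ) ∣ (n : ℤ) := Int.natCast_dvd_natCast.mpr (Nat.dvd_lcm_right a b)
  -- key period facts
  have keya : ∀ y : X, α.SameCycle xa y → ∀ i j : ℤ,
      (α ^ i) y = (α ^ j) y ↔ (a : ℤ) ∣ i - j := by
    intro y hy i j
    have := aux_key α hy i j
    rwa [← hSa, hca] at this
  have keyb : ∀ y : X, α.SameCycle xb y → ∀ i j : ℤ,
      (α ^ i) y = (α ^ j) y ↔ (b : ℤ) ∣ i - j := by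
    intro y hy i j
    have := aux_key α hy i j
    rwa [← hSb, hcb] at this
  -- Part 1
  have part1 : ∀ p ∈ Sa ×ˢ Sb,
      Set.ncard {q | Equiv.Perm.SameCycle (Equiv.prodCongr α α) p q} = n := by
    rintro ⟨p1, p2⟩ hp
    obtain ⟨hp1, hp2⟩ : p1 ∈ Sa ∧ p2 ∈ Sb := hp
    rw [hSa] at hp1; rw [hSb] at hp2
    have horb : {q | Equiv.Perm.SameCycle (Equiv.prodCongr α α) (p1, p2) q}
        = Set.range (fun i : Fin n => ((α ^ (i : ℕ)) p1, (α ^ (i : ℕ)) p2)) := by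
      ext q
      constructor
      · rintro ⟨k, hk⟩
        rw [aux_pc_zpow] at hk
        simp only [Equiv.prodCongr_apply, Prod.map] at hk
        set r : ℤ := k % (n : ℤ) with hr
        have hnz : (n : ℤ) ≠ 0 := by exact_mod_cast hnpos.ne'
        have hr0 : 0 ≤ r := Int.emod_nonneg _ hnz
        have hrlt : r < (n : ℤ) := Int.emod_lt_of_pos _ (by exact_mod_cast hnpos)
        have hdvdn : (n : ℤ) ∣ k - r := Int.dvd_self_sub_of_emod_eq rfl
        refine ⟨⟨r.toNat, by omega⟩, ?_⟩
        have hsub : ∀ c : ℤ, c ∣ (n : ℤ) → c ∣ r - k := by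
          intro c hc
          have h1 : c ∣ -(k - r) := dvd_neg.mpr (hc.trans hdvdn)
          rwa [neg_sub] at h1
        have e1 : (α ^ ((r.toNat : ℕ) : ℤ)) p1 = (α ^ k) p1 :=
          (keya p1 hp1 _ _).mpr (by rw [Int.toNat_of_nonneg hr0]; exact hsub _ hadvd)
        have e2 : (α ^ ((r.toNat : ℕ) : ℤ)) p2 = (α ^ k) p2 :=
          (keyb p2 hp2 _ _).mpr (by rw [Int.toNat_of_nonneg hr0]; exact hsub _ hbdvd)
        show ((α ^ (r.toNat : ℕ)) p1, (α ^ (r.toNat : ℕ)) p2) = q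
        rw [← zpow_natCast α r.toNat, e1, e2, hk]
      · rintro ⟨i, hi⟩
        refine ⟨((i : ℕ) : ℤ), ?_⟩
        rw [aux_pc_zpow]
        simp only [Equiv.prodCongr_apply, Prod.map, zpow_natCast]
        exact hi
    have hinj : Function.Injective
        (fun i : Fin n => ((α ^ (i : ℕ)) p1, (α ^ (i : ℕ)) p2)) := by
      intro i j hij
      simp only [Prod.mk.injEq] at hij
      have d1 : (a : ℤ) ∣ (i : ℤ) - (j : ℤ) := by
        apply (keya p1 hp1 _ _).mp
        rw [zpow_natCast, zpow_natCast]
        exact_mod_cast hij.1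
      have d2 : (b : ℤ) ∣ (i : ℤ) - (j : ℤ) := by
        apply (keyb p2 hp2 _ _).mp
        rw [zpow_natCast, zpow_natCast]
        exact_mod_cast hij.2
      have dn : ((n : ℕ) : ℤ) ∣ (i : ℤ) - (j : ℤ) := by
        have := Int.lcm_dvd (Int.dvd_natAbs.mpr d1) (Int.dvd_natAbs.mpr d2)
        exact Int.ofNat_dvd_left.mpr (by simpa [Int.lcm, hn] using this)
      have hzero : (i : ℤ) - (j : ℤ) = 0 := by
        apply Int.eq_zero_of_abs_lt_dvd dn
        have hi2 := i.2
        have hj2 := j.2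
        rw [abs_lt]
        omega
      exact Fin.ext (by omega)
    rw [horb, ← Nat.card_coe_set_eq, Nat.card_range_of_injective hinj,
      Nat.card_eq_fintype_card, Fintype.card_fin]
  refine ⟨part1, ?_⟩
  set pc := Equiv.prodCongr α α with hpc
  set 𝒪 : Set (Set (X × X)) :=
    {O | ∃ p ∈ Sa ×ˢ Sb, O = {q | Equiv.Perm.SameCycle pc p q}} with hOdef
  show 𝒪.ncard = a.gcd b
  have hPcard : (Sa ×ˢ Sb).ncard = a * b := by
    rw [← Nat.card_coe_set_eq, Nat.card_congr (Equiv.Set.prod Sa Sb), Nat.card_prod,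
      Nat.card_coe_set_eq, Nat.card_coe_set_eq, hca, hcb]
  have hsubP : ∀ O ∈ 𝒪, O ⊆ Sa ×ˢ Sb := by
    rintro O ⟨p, hp, rfl⟩ q ⟨k, hk⟩
    rw [hpc, aux_pc_zpow] at hk
    simp only [Equiv.prodCongr_apply, Prod.map] at hk
    subst hk
    obtain ⟨hp1, hp2⟩ := hp
    rw [hSa] at hp1
    rw [hSb] at hp2
    refine ⟨?_, ?_⟩
    · rw [hSa]; exact hp1.trans ⟨k, rfl⟩
    · rw [hSb]; exact hp2.trans ⟨k, rfl⟩
  have hcardO : ∀ O ∈ 𝒪, O.ncard = n := by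
    rintro O ⟨p, hp, rfl⟩; exact part1 p hp
  have hdisjO : ∀ O1 ∈ 𝒪, ∀ O2 ∈ 𝒪, O1 ≠ O2 → Disjoint O1 O2 := by
    rintro O1 ⟨p, hp, rfl⟩ O2 ⟨p', hp', rfl⟩ hne
    rw [Set.disjoint_left]
    intro q hq hq'
    apply hne
    ext r
    simp only [Set.mem_setOf_eq] at hq hq' ⊢
    exact ⟨fun h => hq'.trans (hq.symm.trans h), fun h => hq.trans (hq'.symm.trans h)⟩
  set F : Finset (Set (X × X)) := (Set.toFinite 𝒪).toFinset with hF
  set t : Set (X × X) → Finset (X × X) := fun O => (Set.toFinite O).toFinset with ht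
  have hcover : (Set.toFinite (Sa ×ˢ Sb)).toFinset = F.biUnion t := by
    ext q
    rw [Set.Finite.mem_toFinset, Finset.mem_biUnion]
    constructor
    · intro hq
      refine ⟨{r | Equiv.Perm.SameCycle pc q r}, ?_, ?_⟩
      · rw [hF, Set.Finite.mem_toFinset]; exact ⟨q, hq, rfl⟩
      · rw [ht]
        simp only [Set.Finite.mem_toFinset, Set.mem_setOf_eq]
        exact Equiv.Perm.SameCycle.refl _ _
    · rintro ⟨O, hO1, hO2⟩
      rw [hF, Set.Finite.mem_toFinset] at hO1
      rw [ht] at hO2; simp only [Set.Finite.mem_toFinset] at hO2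
      exact hsubP O hO1 hO2
  have hsum : (F.biUnion t).card = F.card * n := by
    rw [Finset.card_biUnion]
    · rw [Finset.sum_congr rfl (g := fun _ => n) (fun O hO => ?_), Finset.sum_const,
        smul_eq_mul]
      rw [hF, Set.Finite.mem_toFinset] at hO
      rw [ht]
      rw [← Set.ncard_eq_toFinset_card _ (Set.toFinite O)]
      exact hcardO O hO
    · intro O1 h1 O2 h2 hne
      simp only [Finset.mem_coe] at h1 h2
      rw [hF, Set.Finite.mem_toFinset] at h1 h2
      show Disjoint (t O1) (t O2)
      rw [Finset.disjoint_left]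
      intro q hq1 hq2
      rw [ht] at hq1 hq2
      simp only [Set.Finite.mem_toFinset] at hq1 hq2
      exact Set.disjoint_left.mp (hdisjO O1 h1 O2 h2 hne) hq1 hq2
  have hab : F.card * n = a * b := by
    rw [← hsum, ← hcover, ← Set.ncard_eq_toFinset_card _ (Set.toFinite (Sa ×ˢ Sb)), hPcard]
  have hgcd : a.gcd b * n = a * b := Nat.gcd_mul_lcm a b
  rw [Set.ncard_eq_toFinset_card _ (Set.toFinite 𝒪)]
  exact Nat.eq_of_mul_eq_mul_right hnpos (by rw [hab, hgcd])
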